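/- arXiv:2403.17028 — 3 statements merged into one kernel-verified Lean document; each statement's English description precedes it below -/
import Mathlib

section
/- Let P be a dyadic n-dimensional polytope, i.e., P = C ∩ D^n where C is a real polytope in ℝ^n with vertices in D^n. If W is a wall (face) of the real polytope C, then W ∩ P is a wall of the groupoid (P, ∘), where x ∘ y = (x+y)/2 coordinatewise. -/
def IsDyadic (x : ℝ) : Prop := ∃ k : ℤ, ∃ n : ℕ, x = (k : ℝ) / 2 ^ n

/-- A wall of a real convex set `C`: for all `a, b ∈ C` and `r ∈ (0,1)`,
`(1-r)a + rb ∈ W` iff `a ∈ W` and `b ∈ W`. -/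
def IsRealWall {n : ℕ} (C W : Set (Fin n → ℝ)) : Prop :=
  W ⊆ C ∧ ∀ a ∈ C, ∀ b ∈ C, ∀ r : ℝ, 0 < r → r < 1 →
    ((1 - r) • a + r • b ∈ W ↔ a ∈ W ∧ b ∈ W)

def IsDyadicWall {n : ℕ} (P A : Set (Fin n → ℝ)) : Prop :=
  A ⊆ P ∧ ∀ a ∈ P, ∀ b ∈ P, ((fun i => (a i + b i) / 2) ∈ A ↔ a ∈ A ∧ b ∈ A)

lemma isDyadic_mid {x y : ℝ} (hx : IsDyadic x) (hy : IsDyadic y) :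
    IsDyadic ((x + y) / 2) := by
  obtain ⟨k, m, rfl⟩ := hx
  obtain ⟨l, p, rfl⟩ := hy
  refine ⟨k * 2 ^ p + l * 2 ^ m, m + p + 1, ?_⟩
  have h2 : (2:ℝ) ^ m ≠ 0 := by positivity
  have h3 : (2:ℝ) ^ p ≠ 0 := by positivity
  rw [div_add_div _ _ h2 h3, div_div, div_eq_div_iff (by positivity) (by positivity)]
  push_cast
  ring

theorem real_wall_gives_dyadic_wall {n : ℕ} (V : Set (Fin n → ℝ))
    (hVfin : V.Finite) (hVd : ∀ v ∈ V, ∀ i, IsDyadic (v i))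
    (C : Set (Fin n → ℝ)) (hC : C = convexHull ℝ V)
    (P : Set (Fin n → ℝ)) (hP : P = C ∩ {x | ∀ i, IsDyadic (x i)})
    (W : Set (Fin n → ℝ)) (hW : IsRealWall C W) :
    IsDyadicWall P (W ∩ P) := by
  obtain ⟨hWC, hwall⟩ := hW
  refine ⟨Set.inter_subset_right, ?_⟩
  intro a ha b hb
  have haC : a ∈ C := by rw [hP] at ha; exact ha.1
  have hbC : b ∈ C := by rw [hP] at hb; exact hb.1
  have hmid : (fun i => (a i + b i) / 2) = (1 - (1/2 : ℝ)) • a + (1/2 : ℝ) • b := by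
    funext i; simp; ring
  have hmidC : (fun i => (a i + b i) / 2) ∈ C := by
    rw [hmid, hC]
    exact (convex_convexHull ℝ V) (hC ▸ haC) (hC ▸ hbC) (by norm_num) (by norm_num)
      (by norm_num)
  have hmidP : (fun i => (a i + b i) / 2) ∈ P := by
    rw [hP]
    refine ⟨hmidC, fun i => ?_⟩
    exact isDyadic_mid ((hP ▸ ha).2 i) ((hP ▸ hb).2 i)
  have key := hwall a haC b hbC (1/2) (by norm_num) (by norm_num)
  rw [← hmid] at key
  constructor
  · intro h
    exact ⟨⟨(key.mp h.1).1, ha⟩, ⟨(key.mp h.1).2, hb⟩⟩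
  · intro ⟨h1, h2⟩
    exact ⟨key.mpr ⟨h1.1, h2.1⟩, hmidP⟩
end

section
/- Every one-dimensional dyadic polytope (a dyadic interval [a,c] ∩ D with a < c dyadic) has exactly three nonempty walls: the two singleton endpoints {a}, {c}, and the whole interval itself. -/
def IsWall (C A : Set ℝ) : Prop :=
  A ⊆ C ∧ ∀ a ∈ C, ∀ b ∈ C, ((a + b) / 2 ∈ A ↔ a ∈ A ∧ b ∈ A)

lemma IsDyadic.add {x y : ℝ} (hx : IsDyadic x) (hy : IsDyadic y) : IsDyadic (x + y) := by
  obtain ⟨k, n, rfl⟩ := hx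
  obtain ⟨l, m, rfl⟩ := hy
  refine ⟨k * 2 ^ m + l * 2 ^ n, n + m, ?_⟩
  have h2n : (2 : ℝ) ^ n ≠ 0 := by positivity
  have h2m : (2 : ℝ) ^ m ≠ 0 := by positivity
  push_cast
  rw [pow_add, div_add_div _ _ h2n h2m, div_eq_div_iff (by positivity) (by positivity)]
  ring

lemma IsDyadic.neg {x : ℝ} (hx : IsDyadic x) : IsDyadic (-x) := by
  obtain ⟨k, n, rfl⟩ := hx
  exact ⟨-k, n, by push_cast; ring⟩

lemma IsDyadic.half {x : ℝ} (hx : IsDyadic x) : IsDyadic (x / 2) := by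
  obtain ⟨k, n, rfl⟩ := hx
  refine ⟨k, n + 1, ?_⟩
  rw [pow_succ]
  ring

lemma IsDyadic.sub {x y : ℝ} (hx : IsDyadic x) (hy : IsDyadic y) : IsDyadic (x - y) := by
  have := hx.add hy.neg
  simpa [sub_eq_add_neg] using this

theorem walls_of_dyadic_interval (a c : ℝ) (ha : IsDyadic a) (hc : IsDyadic c)
    (hac : a < c) :
    ∀ A : Set ℝ, (A.Nonempty ∧ IsWall {x : ℝ | IsDyadic x ∧ a ≤ x ∧ x ≤ c} A) ↔
      (A = {a} ∨ A = {c} ∨ A = {x : ℝ | IsDyadic x ∧ a ≤ x ∧ x ≤ c}) := by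
  set C : Set ℝ := {x : ℝ | IsDyadic x ∧ a ≤ x ∧ x ≤ c} with hCdef
  have haC : a ∈ C := ⟨ha, le_refl a, hac.le⟩
  have hcC : c ∈ C := ⟨hc, hac.le, le_refl c⟩
  intro A
  constructor
  · rintro ⟨⟨m0, hm0A⟩, hAC, hwall⟩
    -- if m ∈ A and m < c then a ∈ A, given c - a ≤ 2^n (c - m)
    have reachA : ∀ n : ℕ, ∀ m, m ∈ A → m < c → c - a ≤ 2 ^ n * (c - m) → a ∈ A := by
      intro n
      induction n with
      | zero =>
        intro m hm hmc hle
        have hma : m ≤ a := by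
          simp only [pow_zero, one_mul] at hle; linarith
        have : m = a := le_antisymm hma (hAC hm).2.1
        exact this ▸ hm
      | succ n ih =>
        intro m hm hmc hle
        have hmC := hAC hm
        obtain ⟨hmd, hma, hmc'⟩ := hmC
        by_cases hhalf : m ≤ (a + c) / 2
        · have hy : (2 * m - a) ∈ C := by
            refine ⟨?_, by linarith, by linarith⟩
            have : 2 * m - a = m + (m - a) := by ring
            rw [this]; exact hmd.add (hmd.sub ha)
          have hmidA : (a + (2 * m - a)) / 2 ∈ A := by
            have he : (a + (2 * m - a)) / 2 = m := by ring
            rw [he]; exact hm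
          exact ((hwall a haC _ hy).mp hmidA).1
        · push_neg at hhalf
          have hm'C : (2 * m - c) ∈ C := by
            refine ⟨?_, by linarith, by linarith⟩
            have : 2 * m - c = m + (m - c) := by ring
            rw [this]; exact hmd.add (hmd.sub hc)
          have hmidA : ((2 * m - c) + c) / 2 ∈ A := by
            have he : ((2 * m - c) + c) / 2 = m := by ring
            rw [he]; exact hm
          have hm'A := ((hwall _ hm'C c hcC).mp hmidA).1
          refine ih (2 * m - c) hm'A (by linarith) ?_
          have he : (2 : ℝ) ^ (n + 1) * (c - m) = 2 ^ n * (c - (2 * m - c)) := by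
            rw [pow_succ]; ring
          linarith [he ▸ hle]
    -- symmetric: if m ∈ A and a < m then c ∈ A
    have reachC : ∀ n : ℕ, ∀ m, m ∈ A → a < m → c - a ≤ 2 ^ n * (m - a) → c ∈ A := by
      intro n
      induction n with
      | zero =>
        intro m hm hma hle
        have hmc : c ≤ m := by
          simp only [pow_zero, one_mul] at hle; linarith
        have : m = c := le_antisymm (hAC hm).2.2 hmc
        exact this ▸ hm
      | succ n ih =>
        intro m hm hma hle
        have hmC := hAC hm
        obtain ⟨hmd, hma', hmc'⟩ := hmC
        by_cases hhalf : (a + c) / 2 ≤ m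
        · have hy : (2 * m - c) ∈ C := by
            refine ⟨?_, by linarith, by linarith⟩
            have : 2 * m - c = m + (m - c) := by ring
            rw [this]; exact hmd.add (hmd.sub hc)
          have hmidA : ((2 * m - c) + c) / 2 ∈ A := by
            have he : ((2 * m - c) + c) / 2 = m := by ring
            rw [he]; exact hm
          exact ((hwall _ hy c hcC).mp hmidA).2
        · push_neg at hhalf
          have hm'C : (2 * m - a) ∈ C := by
            refine ⟨?_, by linarith, by linarith⟩
            have : 2 * m - a = m + (m - a) := by ring
            rw [this]; exact hmd.add (hmd.sub ha)
          have hmidA : (a + (2 * m - a)) / 2 ∈ A := by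
            have he : (a + (2 * m - a)) / 2 = m := by ring
            rw [he]; exact hm
          have hm'A := ((hwall a haC _ hm'C).mp hmidA).2
          refine ih (2 * m - a) hm'A (by linarith) ?_
          have he : (2 : ℝ) ^ (n + 1) * (m - a) = 2 ^ n * ((2 * m - a) - a) := by
            rw [pow_succ]; ring
          linarith [he ▸ hle]
    by_cases hint : ∃ m ∈ A, a < m ∧ m < c
    · -- A = C
      right; right
      obtain ⟨m, hmA, hma, hmc⟩ := hint
      have haA : a ∈ A := by
        obtain ⟨n, hn⟩ := pow_unbounded_of_one_lt ((c - a) / (c - m)) (by norm_num : (1:ℝ) < 2)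
        exact reachA n m hmA hmc (by
          rw [div_lt_iff₀ (by linarith)] at hn
          linarith)
      have hcA : c ∈ A := by
        obtain ⟨n, hn⟩ := pow_unbounded_of_one_lt ((c - a) / (m - a)) (by norm_num : (1:ℝ) < 2)
        exact reachC n m hmA hma (by
          rw [div_lt_iff₀ (by linarith)] at hn
          linarith)
      have hmidA : (a + c) / 2 ∈ A := (hwall a haC c hcC).mpr ⟨haA, hcA⟩
      apply Set.Subset.antisymm hAC
      intro x hx
      obtain ⟨hxd, hxa, hxc⟩ := hx
      have hyC : (a + c - x) ∈ C := by
        refine ⟨(ha.add hc).sub hxd, by linarith, by linarith⟩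
      have he : (x + (a + c - x)) / 2 = (a + c) / 2 := by ring
      exact ((hwall x ⟨hxd, hxa, hxc⟩ _ hyC).mp (he ▸ hmidA)).1
    · push_neg at hint
      have hends : ∀ x ∈ A, x = a ∨ x = c := by
        intro x hx
        obtain ⟨_, hxa, hxc⟩ := hAC hx
        rcases eq_or_lt_of_le hxa with h | h
        · exact Or.inl h.symm
        · exact Or.inr (le_antisymm hxc (hint x hx h))
      by_cases haA : a ∈ A
      · by_cases hcA : c ∈ A
        · exfalso
          have hmidA : (a + c) / 2 ∈ A := (hwall a haC c hcC).mpr ⟨haA, hcA⟩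
          rcases hends _ hmidA with h | h <;> linarith
        · left
          ext x
          simp only [Set.mem_singleton_iff]
          constructor
          · intro hx
            rcases hends x hx with h | h
            · exact h
            · exact absurd (h ▸ hx) hcA
          · rintro rfl; exact haA
      · by_cases hcA : c ∈ A
        · right; left
          ext x
          simp only [Set.mem_singleton_iff]
          constructor
          · intro hx
            rcases hends x hx with h | h
            · exact absurd (h ▸ hx) haA
            · exact h
          · rintro rfl; exact hcA
        · exfalso
          rcases hends m0 hm0A with h | h
          · exact haA (h ▸ hm0A)
          · exact hcA (h ▸ hm0A)
  · rintro (rfl | rfl | rfl)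
    · refine ⟨⟨a, rfl⟩, ?_, ?_⟩
      · intro x hx; simp only [Set.mem_singleton_iff] at hx; exact hx ▸ haC
      · intro x hx y hy
        simp only [Set.mem_singleton_iff]
        constructor
        · intro h
          obtain ⟨_, hxa, _⟩ := hx
          obtain ⟨_, hya, _⟩ := hy
          constructor <;> linarith
        · rintro ⟨rfl, rfl⟩; ring
    · refine ⟨⟨c, rfl⟩, ?_, ?_⟩
      · intro x hx; simp only [Set.mem_singleton_iff] at hx; exact hx ▸ hcC
      · intro x hx y hy
        simp only [Set.mem_singleton_iff]
        constructor
        · intro h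
          obtain ⟨_, _, hxc⟩ := hx
          obtain ⟨_, _, hyc⟩ := hy
          constructor <;> linarith
        · rintro ⟨rfl, rfl⟩; ring
    · refine ⟨⟨a, haC⟩, le_refl _, ?_⟩
      intro x hx y hy
      refine ⟨fun _ => ⟨hx, hy⟩, fun _ => ?_⟩
      obtain ⟨hxd, hxa, hxc⟩ := hx
      obtain ⟨hyd, hya, hyc⟩ := hy
      exact ⟨(hxd.add hyd).half, by linarith, by linarith⟩
end

section
/- The subgroupoid of (D², ∘) generated by the four points A₀=(0,0), A₁=(1,3), A₂=(3,0), A₃=(1,1) does not contain the point (1,0), even though (1,0) lies in the real convex hull of {A₀, A₁, A₂}. -/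
inductive MeanClosure2 (X : Set (ℝ × ℝ)) : (ℝ × ℝ) → Prop
  | base {p} : p ∈ X → MeanClosure2 X p
  | mean {p q} : MeanClosure2 X p → MeanClosure2 X q →
      MeanClosure2 X ((p.1 + q.1) / 2, (p.2 + q.2) / 2)

lemma isDyadic_avg {a b : ℝ} (ha : IsDyadic a) (hb : IsDyadic b) :
    IsDyadic ((a + b) / 2) := by
  obtain ⟨k, n, rfl⟩ := ha
  obtain ⟨l, m, rfl⟩ := hb
  refine ⟨k * 2 ^ m + l * 2 ^ n, n + m + 1, ?_⟩
  have h1 : (2:ℝ) ^ n ≠ 0 := by positivity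
  have h2 : (2:ℝ) ^ m ≠ 0 := by positivity
  push_cast
  rw [pow_add, pow_add]
  field_simp

theorem four_points_do_not_generate_one_zero :
    ¬ MeanClosure2 {((0 : ℝ), (0 : ℝ)), (1, 3), (3, 0), (1, 1)} (1, 0) ∧
    ((1 : ℝ), (0 : ℝ)) ∈ convexHull ℝ {((0 : ℝ), (0 : ℝ)), (1, 3), (3, 0)} := by
  constructor
  · intro h
    have key : ∀ p, MeanClosure2 {((0 : ℝ), (0 : ℝ)), (1, 3), (3, 0), (1, 1)} p →
        0 ≤ p.2 ∧ (p.2 = 0 → ∃ c : ℝ, IsDyadic c ∧ p.1 = 3 * c) := by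
      intro p hp
      induction hp with
      | base hmem =>
        rcases hmem with h0 | h1 | h2 | h3
        · subst h0
          exact ⟨le_refl 0, fun _ => ⟨0, ⟨0, 0, by norm_num⟩, by norm_num⟩⟩
        · subst h1; exact ⟨by norm_num, fun hc => by norm_num at hc⟩
        · subst h2
          exact ⟨le_refl 0, fun _ => ⟨1, ⟨1, 0, by norm_num⟩, by norm_num⟩⟩
        · subst h3; exact ⟨by norm_num, fun hc => by norm_num at hc⟩
      | @mean a b hp hq ihp ihq =>
        refine ⟨by simp only; linarith [ihp.1, ihq.1], ?_⟩
        intro hy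
        simp only at hy ⊢
        have hp0 : a.2 = (0:ℝ) := by linarith [ihp.1, ihq.1]
        have hq0 : b.2 = (0:ℝ) := by linarith [ihp.1, ihq.1]
        obtain ⟨c1, hc1, hx1⟩ := ihp.2 hp0
        obtain ⟨c2, hc2, hx2⟩ := ihq.2 hq0
        exact ⟨(c1 + c2) / 2, isDyadic_avg hc1 hc2, by rw [hx1, hx2]; ring⟩
    obtain ⟨-, h2⟩ := key _ h
    obtain ⟨c, ⟨k, n, rfl⟩, hc⟩ := h2 rfl
    simp only at hc
    have h2n : (0:ℝ) < 2 ^ n := by positivity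
    have : ((2:ℤ) ^ n : ℝ) = ((3 * k : ℤ) : ℝ) := by
      push_cast
      field_simp at hc
      linarith
    have hz : (2:ℤ) ^ n = 3 * k := by exact_mod_cast this
    have : (3:ℤ) ∣ 2 ^ n := ⟨k, hz⟩
    have : (3:ℕ) ∣ 2 ^ n := by exact_mod_cast this
    have := Nat.Prime.dvd_of_dvd_pow Nat.prime_three this
    omega
  · have h01 : ((0:ℝ), (0:ℝ)) ∈ ({((0 : ℝ), (0 : ℝ)), (1, 3), (3, 0)} : Set (ℝ × ℝ)) := by
      simp
    have h02 : ((3:ℝ), (0:ℝ)) ∈ ({((0 : ℝ), (0 : ℝ)), (1, 3), (3, 0)} : Set (ℝ × ℝ)) := by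
      simp
    have hseg : ((1:ℝ), (0:ℝ)) ∈ segment ℝ ((0:ℝ), (0:ℝ)) ((3:ℝ), (0:ℝ)) := by
      refine ⟨2/3, 1/3, by norm_num, by norm_num, by norm_num, ?_⟩
      norm_num [Prod.ext_iff]
    exact segment_subset_convexHull h01 h02 hseg
end
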